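/- Let X be a separable metrizable indecomposable semicontinuum with more than one point and let K_0, K_1, …, K_{n-1} be finitely many proper subcontinua of X. Then the union K_0 ∪ ⋯ ∪ K_{n-1} has empty interior in X. -/

import Mathlib

open Set

/-- Helper: one asymmetric case of the connectedness argument for `K ∪ U`. -/
lemma helper_case {X : Type*} [TopologicalSpace X] [ConnectedSpace X]
    {K U p q : Set X} (hKne : K.Nonempty) (hA : IsClosed (K ∪ U)) (hU : IsOpen U)
    (hp : IsOpen p) (hq : IsOpen q) (hcov : K ∪ U ⊆ p ∪ q)
    (hdis : (K ∪ U) ∩ (p ∩ q) = ∅) (hKp : K ⊆ p)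
    (hbq : ((K ∪ U) ∩ q).Nonempty) : False := by
  set A := K ∪ U with hAdef
  have hQeq1 : A ∩ q = A \ p := by
    apply Subset.antisymm
    · rintro x ⟨hxA, hxq⟩
      refine ⟨hxA, fun hxp => ?_⟩
      have : x ∈ A ∩ (p ∩ q) := ⟨hxA, hxp, hxq⟩
      rw [hdis] at this; exact this
    · rintro x ⟨hxA, hxp⟩
      rcases hcov hxA with h | h
      · exact absurd h hxp
      · exact ⟨hxA, h⟩
  have hQeq2 : A ∩ q = U ∩ q := by
    apply Subset.antisymm
    · rintro x ⟨hxA, hxq⟩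
      rcases hxA with hxK | hxU
      · have : x ∈ A ∩ (p ∩ q) := ⟨Or.inl hxK, hKp hxK, hxq⟩
        rw [hdis] at this; exact this.elim
      · exact ⟨hxU, hxq⟩
    · rintro x ⟨hxU, hxq⟩
      exact ⟨Or.inr hxU, hxq⟩
  have hclopen : IsClopen (A ∩ q) := by
    constructor
    · rw [hQeq1]; exact hA.sdiff hp
    · rw [hQeq2]; exact hU.inter hq
  rcases isClopen_iff.mp hclopen with h | h
  · rw [h] at hbq; exact hbq.elim (fun x hx => hx)
  · obtain ⟨k, hk⟩ := hKne
    have : k ∈ A ∩ q := h ▸ mem_univ k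
    have : k ∈ A ∩ (p ∩ q) := ⟨this.1, hKp hk, this.2⟩
    rw [hdis] at this; exact this
/-- If `K` is preconnected and nonempty, `U` is open, and `K ∪ U` is closed,
then `K ∪ U` is preconnected (in a connected space). -/
lemma conn_aux {X : Type*} [TopologicalSpace X] [ConnectedSpace X]
    {K U : Set X} (hK : IsPreconnected K) (hKne : K.Nonempty)
    (hA : IsClosed (K ∪ U)) (hU : IsOpen U) : IsPreconnected (K ∪ U) := by
  intro p q hp hq hcov hap hbq
  by_contra hne
  have hdis : (K ∪ U) ∩ (p ∩ q) = ∅ := by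
    rw [← not_nonempty_iff_eq_empty]
    exact fun h => hne h
  have hKor : K ⊆ p ∨ K ⊆ q := by
    by_contra hcon
    push_neg at hcon
    obtain ⟨hnp, hnq⟩ := hcon
    have hKpq : K ⊆ p ∪ q := fun x hx => hcov (Or.inl hx)
    have h1 : (K ∩ q).Nonempty := by
      obtain ⟨x, hx, hxp⟩ := not_subset.mp hnp
      rcases hKpq hx with h | h
      · exact absurd h hxp
      · exact ⟨x, hx, h⟩
    have h2 : (K ∩ p).Nonempty := by
      obtain ⟨x, hx, hxq⟩ := not_subset.mp hnq
      rcases hKpq hx with h | h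
      · exact ⟨x, hx, h⟩
      · exact absurd h hxq
    obtain ⟨x, hx⟩ := hK p q hp hq hKpq h2 h1
    have : x ∈ (K ∪ U) ∩ (p ∩ q) := ⟨Or.inl hx.1, hx.2⟩
    rw [hdis] at this; exact this
  rcases hKor with h | h
  · exact helper_case hKne hA hU hp hq hcov hdis h hbq
  · refine helper_case hKne hA hU hq hp ?_ ?_ h hap
    · rwa [union_comm q p]
    · rwa [inter_comm q p]

/-- A proper closed connected subset of an indecomposable connected space
has empty interior. -/
lemma single_empty {X : Type*} [TopologicalSpace X] [ConnectedSpace X]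
    (hindec : ¬ ∃ A B : Set X,
      IsClosed A ∧ IsConnected A ∧ A ≠ Set.univ ∧
      IsClosed B ∧ IsConnected B ∧ B ≠ Set.univ ∧ A ∪ B = Set.univ)
    {K : Set X} (hcl : IsClosed K) (hconn : IsConnected K) (hne : K ≠ Set.univ) :
    interior K = ∅ := by
  by_contra hint
  by_cases hc : IsPreconnected Kᶜ
  · -- complement connected: K and closure Kᶜ decompose X
    apply hindec
    refine ⟨K, closure Kᶜ, hcl, hconn, hne, isClosed_closure, ?_, ?_, ?_⟩
    · have hcne : Kᶜ.Nonempty := by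
        rw [nonempty_compl]; exact hne
      exact ⟨hcne.mono subset_closure, hc.closure⟩
    · rw [closure_compl]
      intro h
      have : interior K = ∅ := by
        rw [← compl_univ, ← h, compl_compl]
      exact hint this
    · apply eq_univ_of_forall
      intro x
      by_cases hx : x ∈ K
      · exact Or.inl hx
      · exact Or.inr (subset_closure hx)
  · -- complement disconnected: separation gives decomposition
    rw [IsPreconnected] at hc
    push_neg at hc
    obtain ⟨p, q, hp, hq, hcov, hnp, hnq, hpq⟩ := hc
    set U : Set X := Kᶜ ∩ p with hUdef
    set V : Set X := Kᶜ ∩ q with hVdef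
    have hUopen : IsOpen U := (hcl.isOpen_compl).inter hp
    have hVopen : IsOpen V := (hcl.isOpen_compl).inter hq
    have hUV : U ∩ V = ∅ := by
      rw [← not_nonempty_iff_eq_empty]
      rintro ⟨x, ⟨hx1, hx2⟩, ⟨hx3, hx4⟩⟩
      have hxm : x ∈ Kᶜ ∩ (p ∩ q) := ⟨hx1, hx2, hx4⟩
      rw [hpq] at hxm; exact hxm
    have hUVcov : Kᶜ = U ∪ V := by
      apply Subset.antisymm
      · intro x hx
        rcases hcov hx with h | h
        · exact Or.inl ⟨hx, h⟩
        · exact Or.inr ⟨hx, h⟩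
      · rintro x (⟨h, _⟩ | ⟨h, _⟩) <;> exact h
    have hAcl : IsClosed (K ∪ U) := by
      rw [← isOpen_compl_iff]
      have : (K ∪ U)ᶜ = V := by
        rw [compl_union]
        apply Subset.antisymm
        · rintro x ⟨hxK, hxU⟩
          rcases hUVcov ▸ (hxK : x ∈ Kᶜ) with h | h
          · exact absurd h hxU
          · exact h
        · rintro x ⟨hxK, hxq⟩
          refine ⟨hxK, fun hxU => ?_⟩
          have : x ∈ U ∩ V := ⟨hxU, hxK, hxq⟩
          rw [hUV] at this; exact this
      rw [this]; exact hVopen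
    have hBcl : IsClosed (K ∪ V) := by
      rw [← isOpen_compl_iff]
      have : (K ∪ V)ᶜ = U := by
        rw [compl_union]
        apply Subset.antisymm
        · rintro x ⟨hxK, hxV⟩
          rcases hUVcov ▸ (hxK : x ∈ Kᶜ) with h | h
          · exact h
          · exact absurd h hxV
        · rintro x ⟨hxK, hxp⟩
          refine ⟨hxK, fun hxV => ?_⟩
          have : x ∈ U ∩ V := ⟨⟨hxK, hxp⟩, hxV⟩
          rw [hUV] at this; exact this
      rw [this]; exact hUopen
    have hVne : V.Nonempty := hnq
    have hUne : U.Nonempty := hnp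
    apply hindec
    refine ⟨K ∪ U, K ∪ V, hAcl,
      ⟨hconn.nonempty.mono subset_union_left,
        conn_aux hconn.isPreconnected hconn.nonempty hAcl hUopen⟩, ?_,
      hBcl,
      ⟨hconn.nonempty.mono subset_union_left,
        conn_aux hconn.isPreconnected hconn.nonempty hBcl hVopen⟩, ?_, ?_⟩
    · intro h
      obtain ⟨x, hxV⟩ := hVne
      have hx : x ∈ K ∪ U := h ▸ mem_univ x
      rcases hx with hxK | hxU
      · exact hxV.1 hxK
      · have : x ∈ U ∩ V := ⟨hxU, hxV⟩
        rw [hUV] at this; exact this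
    · intro h
      obtain ⟨x, hxU⟩ := hUne
      have hx : x ∈ K ∪ V := h ▸ mem_univ x
      rcases hx with hxK | hxV
      · exact hxU.1 hxK
      · have : x ∈ U ∩ V := ⟨hxU, hxV⟩
        rw [hUV] at this; exact this
    · apply eq_univ_of_forall
      intro x
      by_cases hx : x ∈ K
      · exact Or.inl (Or.inl hx)
      · rcases hUVcov ▸ (Set.mem_compl hx : x ∈ Kᶜ) with h | h
        · exact Or.inl (Or.inr h)
        · exact Or.inr (Or.inr h)

theorem stmt_7 {X : Type*} [TopologicalSpace X] [TopologicalSpace.MetrizableSpace X]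
    [TopologicalSpace.SeparableSpace X] [ConnectedSpace X] [Nontrivial X]
    (hsemi : ∀ x y : X, ∃ K : Set X,
      IsCompact K ∧ IsConnected K ∧ K.Nontrivial ∧ x ∈ K ∧ y ∈ K)
    (hindec : ¬ ∃ A B : Set X,
      IsClosed A ∧ IsConnected A ∧ A ≠ Set.univ ∧
      IsClosed B ∧ IsConnected B ∧ B ≠ Set.univ ∧ A ∪ B = Set.univ)
    (n : ℕ) (K : Fin n → Set X)
    (hK : ∀ i, IsCompact (K i) ∧ IsConnected (K i) ∧ (K i).Nontrivial ∧ K i ≠ Set.univ) :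
    interior (⋃ i, K i) = ∅ := by
  have hsingle : ∀ i, IsClosed (K i) ∧ interior (K i) = ∅ := by
    intro i
    obtain ⟨hcomp, hconn, -, hne⟩ := hK i
    have hcl : IsClosed (K i) := hcomp.isClosed
    exact ⟨hcl, single_empty hindec hcl hconn hne⟩
  have key : ∀ (s : Finset (Fin n)), interior (⋃ i ∈ s, K i) = ∅ := by
    intro s
    induction s using Finset.induction_on with
    | empty => simp
    | insert a t hx ih =>
      rw [Finset.set_biUnion_insert,
        interior_union_isClosed_of_interior_empty (hsingle a).1 ih]
      exact (hsingle a).2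
  have : (⋃ i, K i) = ⋃ i ∈ (Finset.univ : Finset (Fin n)), K i := by simp
  rw [this]
  exact key Finset.univ
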